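/- Let M be a faithful multiplication R-module. If N is a quasi z°-submodule of M, then (N :_R M) is a z°-ideal of R. The converse holds when M is in addition finitely generated. -/

import Mathlib

variable {R : Type*} [CommRing R] {M : Type*} [AddCommGroup M] [Module R M]

/-- `M` is a multiplication module: every submodule is `IM` for some ideal `I`. -/
def IsMultiplicationModule (R M : Type*) [CommRing R] [AddCommGroup M] [Module R M] : Prop :=
  ∀ N : Submodule R M, ∃ I : Ideal R, N = I • (⊤ : Submodule R M)

/-- A prime submodule. -/
def Submodule.IsPrimeSubmodule (P : Submodule R M) : Prop :=
  P ≠ ⊤ ∧ ∀ (r : R) (m : M), r • m ∈ P → m ∈ P ∨ r ∈ P.colon ⊤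

/-- `M` is reduced: the intersection of all prime submodules is zero. -/
def IsReducedModule (R M : Type*) [CommRing R] [AddCommGroup M] [Module R M] : Prop :=
  sInf {P : Submodule R M | P.IsPrimeSubmodule} = ⊥

/-- A minimal prime submodule of `M`. -/
def Submodule.IsMinimalPrime (P : Submodule R M) : Prop :=
  P.IsPrimeSubmodule ∧ ∀ Q : Submodule R M, Q.IsPrimeSubmodule → Q ≤ P → Q = P

/-- `𝔓_K`: the intersection of all minimal prime submodules containing `K`
(equal to `M` if there are none). -/
def primeRad (K : Submodule R M) : Submodule R M :=
  sInf {P : Submodule R M | P.IsMinimalPrime ∧ K ≤ P}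

/-- `V(K)`: the set of minimal prime submodules containing `K`. -/
def Vset (K : Submodule R M) : Set (Submodule R M) :=
  {P : Submodule R M | P.IsMinimalPrime ∧ K ≤ P}

/-- A quasi `z°`-submodule. -/
def IsQuasiZSubmodule (N : Submodule R M) : Prop :=
  N ≠ ⊤ ∧ ∀ a ∈ N.colon ⊤, primeRad (Ideal.span {a} • (⊤ : Submodule R M)) ≤ N

/-- `𝔓_I` for an ideal: intersection of all minimal prime ideals of `R` containing `I`. -/
def idealPrimeRad (I : Ideal R) : Ideal R :=
  sInf {p : Ideal R | p ∈ minimalPrimes R ∧ I ≤ p}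

/-- A `z°`-ideal of `R`. -/
def IsZIdeal (I : Ideal R) : Prop :=
  I ≠ ⊤ ∧ ∀ a ∈ I, idealPrimeRad (Ideal.span {a}) ≤ I

/-- `(0 :_M J)` for an ideal `J`. -/
def pointAnn (J : Ideal R) : Submodule R M where
  carrier := {m : M | ∀ j ∈ J, j • m = 0}
  zero_mem' := by intro j _; simp
  add_mem' := by
    intro a b ha hb j hj
    rw [smul_add, ha j hj, hb j hj, add_zero]
  smul_mem' := by
    intro c m hm j hj
    rw [smul_comm, hm j hj, smul_zero]


theorem aux_colon_smul_le (N : Submodule R M) : N.colon ⊤ • (⊤ : Submodule R M) ≤ N :=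
  Submodule.smul_le.2 fun r hr m hm => Submodule.mem_colon.1 hr m hm

theorem aux_eq_colon_smul (hmul : IsMultiplicationModule R M) (N : Submodule R M) :
    N = N.colon ⊤ • (⊤ : Submodule R M) := by
  obtain ⟨I, hI⟩ := hmul N
  refine le_antisymm ?_ (aux_colon_smul_le N)
  have hIle : I ≤ N.colon ⊤ := fun r hr => Submodule.mem_colon.2 fun m hm => by
    rw [hI]; exact Submodule.smul_mem_smul hr hm
  have h2 : I • (⊤ : Submodule R M) ≤ N.colon ⊤ • (⊤ : Submodule R M) :=
    Submodule.smul_mono_left hIle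
  rwa [← hI] at h2

theorem aux_colon_of_prime (hfaithful : (⊥ : Submodule R M).colon ⊤ = ⊥)
    (hmul : IsMultiplicationModule R M) {p : Ideal R} (hp : p.IsPrime)
    (hne : p • (⊤ : Submodule R M) ≠ ⊤) :
    (p • (⊤ : Submodule R M)).colon ⊤ = p := by
  refine le_antisymm ?_
    (fun r hr => Submodule.mem_colon.2 fun m hm => Submodule.smul_mem_smul hr hm)
  intro r hr
  by_contra hrp
  obtain ⟨x, hx⟩ : ∃ x : M, x ∉ p • (⊤ : Submodule R M) := by
    by_contra h
    push_neg at h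
    exact hne (Submodule.eq_top_iff'.2 h)
  obtain ⟨I, hI⟩ := hmul (Submodule.span R {x})
  have hInp : ¬ I ≤ p := by
    intro h
    have hxm : x ∈ Submodule.span R {x} := Submodule.mem_span_singleton_self x
    rw [hI] at hxm
    exact hx (Submodule.smul_mono_left h hxm)
  obtain ⟨s, hsI, hsp⟩ := SetLike.not_le_iff_exists.1 hInp
  have hsM : ∀ m : M, ∃ t : R, s • m = t • x := by
    intro m
    have h1 : s • m ∈ I • (⊤ : Submodule R M) := Submodule.smul_mem_smul hsI trivial
    rw [← hI] at h1
    obtain ⟨t, ht⟩ := Submodule.mem_span_singleton.1 h1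
    exact ⟨t, ht.symm⟩
  have hrx : r • x ∈ p • (⊤ : Submodule R M) := Submodule.mem_colon.1 hr x trivial
  have hsrx : s • (r • x) ∈ p • Submodule.span R {x} := by
    refine Submodule.smul_induction_on (p := fun z => s • z ∈ p • Submodule.span R {x}) hrx ?_ ?_
    · intro c hc n _
      rw [smul_comm]
      refine Submodule.smul_mem_smul hc ?_
      obtain ⟨t, ht⟩ := hsM n
      exact Submodule.mem_span_singleton.2 ⟨t, ht.symm⟩
    · intro y z hy hz
      rw [smul_add]
      exact add_mem hy hz
  obtain ⟨q, hqp, hq⟩ := Submodule.mem_smul_span_singleton.1 hsrx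
  have hcomm : ∀ m : M, (s * r * s) • m = (q * s) • m := by
    intro m
    obtain ⟨t, ht⟩ := hsM m
    calc (s * r * s) • m = (s * r) • (s • m) := by rw [mul_smul]
      _ = (s * r) • (t • x) := by rw [ht]
      _ = t • ((s * r) • x) := smul_comm _ _ _
      _ = t • (s • (r • x)) := by rw [mul_smul]
      _ = t • (q • x) := by rw [← hq]
      _ = q • (t • x) := smul_comm _ _ _
      _ = q • (s • m) := by rw [ht]
      _ = (q * s) • m := by rw [mul_smul]
  have hsub : s * r * s - q * s ∈ (⊥ : Submodule R M).colon ⊤ := by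
    refine Submodule.mem_colon.2 fun m _ => ?_
    rw [Submodule.mem_bot, sub_smul, hcomm m, sub_self]
  rw [hfaithful, Submodule.mem_bot] at hsub
  have heq : s * r * s = q * s := by linear_combination hsub
  have hmemp : s * r * s ∈ p := by rw [heq]; exact p.mul_mem_right s hqp
  rcases hp.mem_or_mem hmemp with h | h
  · rcases hp.mem_or_mem h with h' | h'
    · exact hsp h'
    · exact hrp h'
  · exact hsp h

theorem aux_prime_smul (hfaithful : (⊥ : Submodule R M).colon ⊤ = ⊥)
    (hmul : IsMultiplicationModule R M) {p : Ideal R} (hp : p.IsPrime)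
    (hne : p • (⊤ : Submodule R M) ≠ ⊤) :
    (p • (⊤ : Submodule R M)).IsPrimeSubmodule := by
  refine ⟨hne, fun r m hrm => ?_⟩
  by_cases hrc : r ∈ (p • (⊤ : Submodule R M)).colon ⊤
  · exact Or.inr hrc
  left
  rw [aux_colon_of_prime hfaithful hmul hp hne] at hrc
  obtain ⟨I, hI⟩ := hmul (Submodule.span R {m})
  have hIp : I ≤ p := by
    intro t ht
    have hrt : r * t ∈ (p • (⊤ : Submodule R M)).colon ⊤ := by
      refine Submodule.mem_colon.2 fun y _ => ?_
      have h1 : t • y ∈ I • (⊤ : Submodule R M) := Submodule.smul_mem_smul ht trivial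
      rw [← hI] at h1
      obtain ⟨c, hc⟩ := Submodule.mem_span_singleton.1 h1
      rw [mul_smul, ← hc, smul_comm]
      exact Submodule.smul_mem _ c hrm
    rw [aux_colon_of_prime hfaithful hmul hp hne] at hrt
    exact (hp.mem_or_mem hrt).resolve_left hrc
  have hm : m ∈ I • (⊤ : Submodule R M) := by
    rw [← hI]; exact Submodule.mem_span_singleton_self m
  exact Submodule.smul_mono_left hIp hm

theorem aux_colon_isPrime {P : Submodule R M} (hP : P.IsPrimeSubmodule) :
    (P.colon ⊤).IsPrime := by
  constructor
  · intro h
    apply hP.1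
    rw [eq_top_iff]
    intro m _
    have h1 : (1 : R) ∈ P.colon ⊤ := by rw [h]; trivial
    have := Submodule.mem_colon.1 h1 m trivial
    rwa [one_smul] at this
  · intro a b hab
    by_cases hb : b ∈ P.colon ⊤
    · exact Or.inr hb
    left
    obtain ⟨m, hm⟩ : ∃ m, b • m ∉ P := by
      by_contra h
      push_neg at h
      exact hb (Submodule.mem_colon.2 fun y _ => h y)
    have h1 : a • (b • m) ∈ P := by
      rw [← mul_smul]; exact Submodule.mem_colon.1 hab m trivial
    rcases hP.2 a (b • m) h1 with h | h
    · exact absurd h hm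
    · exact h

theorem aux_minimal_colon (hfaithful : (⊥ : Submodule R M).colon ⊤ = ⊥)
    (hmul : IsMultiplicationModule R M) {P : Submodule R M} (hP : P.IsMinimalPrime) :
    P.colon ⊤ ∈ minimalPrimes R := by
  have hprime := aux_colon_isPrime hP.1
  obtain ⟨q, hq, hqle⟩ := Ideal.exists_minimalPrimes_le (J := P.colon ⊤) bot_le
  have hqM_le : q • (⊤ : Submodule R M) ≤ P :=
    le_trans (Submodule.smul_mono_left hqle) (aux_colon_smul_le P)
  have hqM_ne : q • (⊤ : Submodule R M) ≠ ⊤ := fun h => hP.1.1 (top_le_iff.1 (h ▸ hqM_le))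
  have hqprime : q.IsPrime := hq.1.1
  have heq := hP.2 _ (aux_prime_smul hfaithful hmul hqprime hqM_ne) hqM_le
  have h2 : P.colon ⊤ = q := by
    rw [← heq, aux_colon_of_prime hfaithful hmul hqprime hqM_ne]
  rw [h2]
  exact hq

theorem aux_smul_minimal (hfaithful : (⊥ : Submodule R M).colon ⊤ = ⊥)
    (hmul : IsMultiplicationModule R M) {q : Ideal R} (hq : q ∈ minimalPrimes R)
    (hne : q • (⊤ : Submodule R M) ≠ ⊤) :
    (q • (⊤ : Submodule R M)).IsMinimalPrime := by
  have hqprime : q.IsPrime := hq.1.1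
  refine ⟨aux_prime_smul hfaithful hmul hqprime hne, fun Q hQ hle => ?_⟩
  have h1 : Q.colon ⊤ ≤ q := by
    rw [← aux_colon_of_prime hfaithful hmul hqprime hne]
    exact fun r hr => Submodule.mem_colon.2 fun m hm => hle (Submodule.mem_colon.1 hr m hm)
  have h2 : q ≤ Q.colon ⊤ := hq.2 ⟨aux_colon_isPrime hQ, bot_le⟩ h1
  rw [aux_eq_colon_smul hmul Q, le_antisymm h1 h2]

theorem stmt10 (hfaithful : (⊥ : Submodule R M).colon ⊤ = ⊥)
    (hmul : IsMultiplicationModule R M) (N : Submodule R M) :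
    (IsQuasiZSubmodule N → IsZIdeal (N.colon ⊤)) ∧
      (Module.Finite R M → IsZIdeal (N.colon ⊤) → IsQuasiZSubmodule N) := by
  constructor
  · rintro ⟨hNtop, hqz⟩
    constructor
    · intro h
      apply hNtop
      rw [eq_top_iff]
      intro m _
      have h1 : (1 : R) ∈ N.colon ⊤ := by rw [h]; trivial
      have := Submodule.mem_colon.1 h1 m trivial
      rwa [one_smul] at this
    · intro a ha r hr
      refine Submodule.mem_colon.2 fun m _ => ?_
      refine hqz a ha ?_
      unfold primeRad
      refine Submodule.mem_sInf.2 fun P hP => ?_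
      obtain ⟨hPmin, haP⟩ := hP
      have hmin := aux_minimal_colon hfaithful hmul hPmin
      have haP' : a ∈ P.colon ⊤ := Submodule.mem_colon.2 fun y _ =>
        haP (Submodule.smul_mem_smul (Ideal.mem_span_singleton_self a) trivial)
      have hr' : r ∈ P.colon ⊤ := by
        unfold idealPrimeRad at hr
        exact Submodule.mem_sInf.1 hr _
          ⟨hmin, (Ideal.span_singleton_le_iff_mem _).2 haP'⟩
      exact Submodule.mem_colon.1 hr' m trivial
  · rintro hfin ⟨hItop, hz⟩
    have hNtop : N ≠ ⊤ := by
      intro h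
      apply hItop
      rw [h, eq_top_iff]
      intro r _
      exact Submodule.mem_colon.2 fun m _ => trivial
    refine ⟨hNtop, fun a ha => ?_⟩
    have hKcolon : (primeRad (Ideal.span {a} • (⊤ : Submodule R M))).colon ⊤ ≤
        idealPrimeRad (Ideal.span {a}) := by
      intro r hr
      unfold idealPrimeRad
      refine Submodule.mem_sInf.2 fun q hq' => ?_
      obtain ⟨hqmin, hqa⟩ := hq'
      have hqprime : Ideal.IsPrime q := hqmin.1.1
      have hqM_ne : q • (⊤ : Submodule R M) ≠ ⊤ := by
        intro h
        obtain ⟨c, hc1, hc0⟩ := Submodule.exists_sub_one_mem_and_smul_eq_zero_of_fg_of_le_smul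
          q ⊤ hfin.fg_top (le_of_eq h.symm)
        have hc : c ∈ (⊥ : Submodule R M).colon ⊤ :=
          Submodule.mem_colon.2 fun m _ => by rw [Submodule.mem_bot]; exact hc0 m trivial
        rw [hfaithful, Submodule.mem_bot] at hc
        rw [hc] at hc1
        apply hqprime.ne_top
        rw [Ideal.eq_top_iff_one]
        simpa using q.neg_mem hc1
      have hKle : primeRad (Ideal.span {a} • (⊤ : Submodule R M)) ≤ q • ⊤ :=
        sInf_le ⟨aux_smul_minimal hfaithful hmul hqmin hqM_ne, Submodule.smul_mono_left hqa⟩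
      have h3 : r ∈ (q • (⊤ : Submodule R M)).colon ⊤ :=
        Submodule.mem_colon.2 fun m hm => hKle (Submodule.mem_colon.1 hr m hm)
      rwa [aux_colon_of_prime hfaithful hmul hqprime hqM_ne] at h3
    calc primeRad (Ideal.span {a} • (⊤ : Submodule R M))
        = (primeRad (Ideal.span {a} • (⊤ : Submodule R M))).colon ⊤ • ⊤ :=
          aux_eq_colon_smul hmul _
      _ ≤ idealPrimeRad (Ideal.span {a}) • ⊤ := Submodule.smul_mono_left hKcolon
      _ ≤ (N.colon ⊤) • ⊤ := Submodule.smul_mono_left (hz a ha)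
      _ ≤ N := aux_colon_smul_le N
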